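/- Let n ≥ 1, 1 ≤ q ≤ p < n, δ > 0, and let w ∈ A_{q,𝓡} on ℝⁿ. Let μ be a locally finite Borel measure on ℝⁿ and define a(R) = d(R)^δ (μ(R)/w(R))^{1/p} for R ∈ 𝓡. Let M > 1 satisfy δ/(nqM) < 1/p, define p*_M by 1/p − 1/p*_M = δ/(nqM), and set M' = M/(M−1). Then for every R ∈ 𝓡 and every countable family {R_i} of pairwise disjoint dyadic subrectangles of R, ( Σ_i a(R_i)^{p*_M} w(R_i)/w(R) )^{1/p*_M} ≤ [w]_{A_{q,𝓡}}^{δ/(nqM)} · ( |⋃_i R_i| / |R| )^{δ/(nM')} · a(R). -/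

import Mathlib

open MeasureTheory Set
open scoped ENNReal NNReal

noncomputable section

/-- `n`-dimensional Euclidean space. -/
abbrev ES (n : ℕ) := EuclideanSpace ℝ (Fin n)

/-- The extended-nonnegative-real absolute value of a real number. -/
def en (r : ℝ) : ℝ≥0∞ := (‖r‖₊ : ℝ≥0∞)

/-- A rectangle in `ℝⁿ` with sides parallel to the coordinate axes, given by its
(nondegenerate, bounded) interval endpoints. -/
structure Rect (n : ℕ) where
  lo : Fin n → ℝ
  hi : Fin n → ℝ
  lt : ∀ i, lo i < hi i

/-- The underlying set of a rectangle (half-open, so that dyadic pieces are disjoint). -/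
def Rect.set {n : ℕ} (R : Rect n) : Set (ES n) :=
  {x | ∀ i, x i ∈ Set.Ico (R.lo i) (R.hi i)}

/-- The (Euclidean) diameter of a rectangle. -/
def Rect.diam {n : ℕ} (R : Rect n) : ℝ :=
  Real.sqrt (∑ i, (R.hi i - R.lo i) ^ 2)

/-- `R.DyadicSub S` : `S` is a dyadic subrectangle of `R`, i.e. is obtained from `R`
by finitely many iterated passages to dyadic children (bisection of every side);
at generation `j` each side of `R` is split into `2^j` equal parts. -/
def Rect.DyadicSub {n : ℕ} (R S : Rect n) : Prop :=
  ∃ (j : ℕ) (k : Fin n → ℕ), (∀ i, k i < 2 ^ j) ∧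
    (∀ i, S.lo i = R.lo i + (k i : ℝ) * (R.hi i - R.lo i) / 2 ^ j) ∧
    (∀ i, S.hi i = R.lo i + ((k i : ℝ) + 1) * (R.hi i - R.lo i) / 2 ^ j)

/-- The eccentricity `e(R) = |R|^{1/n} / d(R)` of a rectangle. -/
def eccen {n : ℕ} (R : Rect n) : ℝ :=
  (volume R.set).toReal ^ ((1 : ℝ) / n) / R.diam

/-- An axis-parallel (half-open) cube with corner `a` and sidelength `ℓ`. -/
def cubeSet {n : ℕ} (a : Fin n → ℝ) (ℓ : ℝ) : Set (ES n) :=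
  {x | ∀ i, x i ∈ Set.Ico (a i) (a i + ℓ)}

section Weights

variable {X : Type} [MeasureSpace X]

/-- A weight, seen as an `ℝ≥0∞`-valued density. -/
def wE (w : X → ℝ) (x : X) : ℝ≥0∞ := ENNReal.ofReal (w x)

/-- `w(E) = ∫_E w dx`. -/
def wMeas (w : X → ℝ) (E : Set X) : ℝ≥0∞ := ∫⁻ x in E, wE w x

/-- The average `(1/|E|) ∫_E g` (with values in `ℝ≥0∞`). -/
def lavg (g : X → ℝ≥0∞) (E : Set X) : ℝ≥0∞ := (∫⁻ x in E, g x) / volume E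

/-- The Muckenhoupt `A_q` constant of the weight `w` relative to the family `F` of sets:
for `q = 1` it is the least `c` with `⨍_E w ≤ c · essinf_E w` for all `E ∈ F`, and for
`q ≠ 1` it is `sup_{E ∈ F} (⨍_E w)(⨍_E w^{-1/(q-1)})^{q-1}`. -/
def aqConstOn (F : Set (Set X)) (q : ℝ) (w : X → ℝ) : ℝ≥0∞ :=
  if q = 1 then
    sInf {c : ℝ≥0∞ | ∀ E ∈ F, lavg (wE w) E ≤ c * essInf (wE w) (volume.restrict E)}
  else
    ⨆ E ∈ F, lavg (wE w) E * (lavg (fun x => wE w x ^ (-1 / (q - 1))) E) ^ (q - 1)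

/-- The maximal operator associated to the family `F`. -/
def maxOnFam (F : Set (Set X)) (g : X → ℝ≥0∞) (x : X) : ℝ≥0∞ :=
  ⨆ E ∈ F, ⨆ _ : x ∈ E, lavg g E

/-- The Fujii–Wilson `A_∞` constant of `w` relative to the family `F`:
`sup_{E∈F} (1/w(E)) ∫_E M_F(w χ_E)`. -/
def fwOn (F : Set (Set X)) (w : X → ℝ) : ℝ≥0∞ :=
  ⨆ E ∈ F, (∫⁻ x in E, maxOnFam F (E.indicator (wE w)) x) / wMeas w E

end Weights

/-- The family `𝓡` of axis-parallel rectangles of `ℝⁿ` (as sets). -/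
def rectFamily (n : ℕ) : Set (Set (ES n)) := Set.range (Rect.set (n := n))

/-- The family of axis-parallel cubes of `ℝⁿ` (as sets). -/
def cubeFamily (n : ℕ) : Set (Set (ES n)) :=
  {E | ∃ (a : Fin n → ℝ) (ℓ : ℝ), 0 < ℓ ∧ E = cubeSet a ℓ}

/-- `[w]_{A_{q,𝓡}}`. -/
def aqR (n : ℕ) (q : ℝ) (w : ES n → ℝ) : ℝ≥0∞ := aqConstOn (rectFamily n) q w

/-- `[w]_{A_q}` over cubes. -/
def aqCube (n : ℕ) (q : ℝ) (w : ES n → ℝ) : ℝ≥0∞ := aqConstOn (cubeFamily n) q w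

/-- The Fujii–Wilson constant `[w]_{A_{∞,𝓡}}`. -/
def fwR (n : ℕ) (w : ES n → ℝ) : ℝ≥0∞ := fwOn (rectFamily n) w

/-- The `SD^s_{p,𝓡}(w)` (smallness-preserving) condition with constant `c` for a functional
`a` on rectangles: for every rectangle `R` and every countable pairwise disjoint family of
dyadic subrectangles of `R`,
`(Σ_i a(R_i)^p w(R_i)/w(R))^{1/p} ≤ c (|⋃ R_i|/|R|)^{1/s} a(R)`. -/
def SDCond (n : ℕ) (p s c : ℝ) (w : ES n → ℝ) (a : Rect n → ℝ) : Prop :=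
  ∀ (R : Rect n) (S : Set ℕ) (T : ℕ → Rect n),
    (∀ i ∈ S, R.DyadicSub (T i)) →
    (S.PairwiseDisjoint fun i => (T i).set) →
    (∑' i : S, ENNReal.ofReal (a (T ↑i)) ^ p * wMeas w (T ↑i).set / wMeas w R.set) ^ (1 / p)
      ≤ ENNReal.ofReal c * (volume (⋃ i ∈ S, (T i).set) / volume R.set) ^ (1 / s) *
          ENNReal.ofReal (a R)

/-- The `D_{p,𝓡}(w)` condition with constant `c` for a functional `a` on rectangles. -/
def DCond (n : ℕ) (p c : ℝ) (w : ES n → ℝ) (a : Rect n → ℝ) : Prop :=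
  ∀ (R : Rect n) (S : Set ℕ) (T : ℕ → Rect n),
    (∀ i ∈ S, R.DyadicSub (T i)) →
    (S.PairwiseDisjoint fun i => (T i).set) →
    (∑' i : S, ENNReal.ofReal (a (T ↑i)) ^ p * wMeas w (T ↑i).set / wMeas w R.set) ^ (1 / p)
      ≤ ENNReal.ofReal (c * a R)

/-- `g` is (everywhere equal to) a polynomial of total degree at most `k` in the `n`
coordinates. -/
def IsPolyDeg (n k : ℕ) (g : ES n → ℝ) : Prop :=
  ∃ p : MvPolynomial (Fin n) ℝ, p.totalDegree ≤ k ∧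
    ∀ x : ES n, g x = MvPolynomial.eval (fun i => x i) p

/-- `g = P_E f`, the orthogonal projection of `f` onto polynomials of degree at most `k`
with respect to the inner product `⟨u,v⟩_E = (1/|E|)∫_E u v`. -/
def IsProjOn (n k : ℕ) (E : Set (ES n)) (f g : ES n → ℝ) : Prop :=
  IsPolyDeg n k g ∧ ∀ φ : ES n → ℝ, IsPolyDeg n k φ → ∫ x in E, (f x - g x) * φ x = 0

/-- `|∇^m f|(x)`: Euclidean norm of the collection of all `m`-th order partial
derivatives of `f` at `x`. -/
def gradmNorm (n m : ℕ) (f : ES n → ℝ) (x : ES n) : ℝ :=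
  Real.sqrt (∑ idx : Fin m → Fin n,
    (iteratedFDeriv ℝ m f x (fun j => EuclideanSpace.single (idx j) (1 : ℝ))) ^ 2)

/-- The dyadic maximal function relative to the rectangle `R`. -/
def dyadMax {n : ℕ} (R : Rect n) (g : ES n → ℝ≥0∞) (x : ES n) : ℝ≥0∞ :=
  ⨆ J : Rect n, ⨆ _ : R.DyadicSub J, ⨆ _ : x ∈ J.set, lavg g J.set

/-- The sharp maximal function `M_k^♯ f(x) = sup_{R ∋ x} ⨍_R |f − P_R f|`, where `P R`
is (assumed to be) the degree-`k` polynomial projection of `f` on `R`. -/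
def sharpMax (n : ℕ) (f : ES n → ℝ) (P : Rect n → ES n → ℝ) (x : ES n) : ℝ≥0∞ :=
  ⨆ R : Rect n, ⨆ _ : x ∈ R.set, lavg (fun y => en (f y - P R y)) R.set

/-- A rectangle of the biparameter family `𝓡_c`: a product of two axis-parallel cubes
`I₁ ⊂ ℝ^{n₁}`, `I₂ ⊂ ℝ^{n₂}`. -/
structure CRect (n₁ n₂ : ℕ) where
  c₁ : Fin n₁ → ℝ
  c₂ : Fin n₂ → ℝ
  l₁ : ℝ
  l₂ : ℝ
  hl₁ : 0 < l₁
  hl₂ : 0 < l₂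

/-- The underlying set `I₁ × I₂` of a biparameter rectangle. -/
def CRect.set {n₁ n₂ : ℕ} (R : CRect n₁ n₂) : Set (ES n₁ × ES n₂) :=
  (cubeSet R.c₁ R.l₁) ×ˢ (cubeSet R.c₂ R.l₂)

/-- The family `𝓡_c` (as sets). -/
def cRectFamily (n₁ n₂ : ℕ) : Set (Set (ES n₁ × ES n₂)) :=
  Set.range (CRect.set (n₁ := n₁) (n₂ := n₂))

/-- `[w]_{A_{q,𝓡_c}}`. -/
def aqC (n₁ n₂ : ℕ) (q : ℝ) (w : ES n₁ × ES n₂ → ℝ) : ℝ≥0∞ :=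
  aqConstOn (cRectFamily n₁ n₂) q w

/-- `|∇₁ f|(z)`: Euclidean norm of the partial gradient of `f` in the first `n₁`
variables (via the a.e.-defined Fréchet derivative). -/
def grad1Norm (n₁ n₂ : ℕ) (f : ES n₁ × ES n₂ → ℝ) (z : ES n₁ × ES n₂) : ℝ :=
  Real.sqrt (∑ i : Fin n₁, (fderiv ℝ f z (EuclideanSpace.single i (1 : ℝ), 0)) ^ 2)

/-- `|∇₂ f|(z)`: Euclidean norm of the partial gradient of `f` in the last `n₂`
variables. -/
def grad2Norm (n₁ n₂ : ℕ) (f : ES n₁ × ES n₂ → ℝ) (z : ES n₁ × ES n₂) : ℝ :=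
  Real.sqrt (∑ i : Fin n₂, (fderiv ℝ f z (0, EuclideanSpace.single i (1 : ℝ))) ^ 2)


section AuxStmt14

variable {n : ℕ}

lemma rect_set_eq (R : Rect n) :
    R.set = (MeasurableEquiv.toLp 2 (Fin n → ℝ)).symm ⁻¹'
      (Set.univ.pi fun i => Set.Ico (R.lo i) (R.hi i)) := by
  ext x
  simp [Rect.set, Set.mem_pi, MeasurableEquiv.coe_toLp_symm, MeasurableEquiv.coe_mk]

lemma measurableSet_rect (R : Rect n) : MeasurableSet R.set := by
  rw [rect_set_eq]
  exact (MeasurableEquiv.toLp 2 (Fin n → ℝ)).symm.measurable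
    (MeasurableSet.univ_pi fun i => measurableSet_Ico)

lemma volume_rect (R : Rect n) :
    volume R.set = ∏ i, ENNReal.ofReal (R.hi i - R.lo i) := by
  rw [rect_set_eq,
    (EuclideanSpace.volume_preserving_symm_measurableEquiv_toLp (Fin n)).measure_preimage
      (MeasurableSet.univ_pi fun i => measurableSet_Ico).nullMeasurableSet,
    volume_pi_pi]
  simp [Real.volume_Ico]

lemma volume_rect_pos (R : Rect n) : 0 < volume R.set := by
  rw [volume_rect]
  simp only [CanonicallyOrderedAdd.prod_pos]
  exact fun i _ => ENNReal.ofReal_pos.2 (sub_pos.2 (R.lt i))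

lemma volume_rect_lt_top (R : Rect n) : volume R.set < ⊤ := by
  rw [volume_rect]
  exact ENNReal.prod_lt_top fun i _ => ENNReal.ofReal_lt_top

lemma diam_pos (hn : 1 ≤ n) (R : Rect n) : 0 < R.diam := by
  apply Real.sqrt_pos.2
  have : (0:ℝ) < (R.hi ⟨0, hn⟩ - R.lo ⟨0, hn⟩) ^ 2 := by
    have := R.lt ⟨0, hn⟩; nlinarith
  exact Finset.sum_pos' (fun i _ => sq_nonneg _) ⟨⟨0, hn⟩, Finset.mem_univ _, this⟩

lemma diam_nonneg (R : Rect n) : 0 ≤ R.diam := Real.sqrt_nonneg _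


lemma dyadic_main {R S : Rect n} (h : R.DyadicSub S) :
    S.set ⊆ R.set ∧ ∃ j : ℕ,
      S.diam = R.diam * ((2:ℝ)^j)⁻¹ ∧
      volume S.set = volume R.set * (ENNReal.ofReal ((2:ℝ)^j)⁻¹) ^ (n : ℕ) := by
  obtain ⟨j, k, hk, hlo, hhi⟩ := h
  have h2 : (0:ℝ) < 2 ^ j := by positivity
  have hside : ∀ i, S.hi i - S.lo i = (R.hi i - R.lo i) * ((2:ℝ)^j)⁻¹ := by
    intro i; rw [hlo i, hhi i]; field_simp; ring
  constructor
  · intro x hx i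
    have h1 := (hx i).1
    have h2' := (hx i).2
    have hΔ : (0:ℝ) ≤ R.hi i - R.lo i := le_of_lt (sub_pos.2 (R.lt i))
    constructor
    · calc R.lo i ≤ S.lo i := by
            rw [hlo i]
            have : (0:ℝ) ≤ (k i : ℝ) * (R.hi i - R.lo i) / 2 ^ j := by positivity
            linarith
        _ ≤ x i := h1
    · calc x i < S.hi i := h2'
        _ ≤ R.hi i := by
            rw [hhi i]
            have hk1 : ((k i : ℝ) + 1) ≤ 2 ^ j := by
              have := hk i
              have : ((k i : ℝ) + 1) ≤ ((2:ℝ))^j := by exact_mod_cast Nat.succ_le_of_lt this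
              simpa using this
            have : ((k i : ℝ) + 1) * (R.hi i - R.lo i) / 2 ^ j ≤ R.hi i - R.lo i := by
              rw [div_le_iff₀ h2]
              nlinarith
            linarith
  · refine ⟨j, ?_, ?_⟩
    · unfold Rect.diam
      have : ∑ i, (S.hi i - S.lo i) ^ 2 = (∑ i, (R.hi i - R.lo i) ^ 2) * (((2:ℝ)^j)⁻¹)^2 := by
        rw [Finset.sum_mul]
        exact Finset.sum_congr rfl fun i _ => by rw [hside i]; ring
      rw [this, Real.sqrt_mul (by positivity), Real.sqrt_sq (by positivity)]
    · rw [volume_rect, volume_rect]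
      calc ∏ i, ENNReal.ofReal (S.hi i - S.lo i)
          = ∏ i : Fin n, (ENNReal.ofReal (R.hi i - R.lo i) * ENNReal.ofReal ((2:ℝ)^j)⁻¹) := by
            refine Finset.prod_congr rfl fun i _ => ?_
            rw [hside i, ENNReal.ofReal_mul (le_of_lt (sub_pos.2 (R.lt i)))]
        _ = (∏ i : Fin n, ENNReal.ofReal (R.hi i - R.lo i)) * ENNReal.ofReal ((2:ℝ)^j)⁻¹ ^ (n:ℕ) := by
            rw [Finset.prod_mul_distrib, Finset.prod_const, Finset.card_univ, Fintype.card_fin]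


lemma rect_subset_compact (R : Rect n) : ∃ K : Set (ES n), IsCompact K ∧ R.set ⊆ K := by
  refine ⟨(EuclideanSpace.equiv (Fin n) ℝ).toHomeomorph ⁻¹'
      (Set.univ.pi fun i => Set.Icc (R.lo i) (R.hi i)), ?_, ?_⟩
  · rw [Homeomorph.isCompact_preimage]
    exact isCompact_univ_pi fun i => isCompact_Icc
  · intro x hx
    simp only [Set.mem_preimage, Set.mem_pi, Set.mem_univ, forall_true_left]
    intro i
    exact ⟨(hx i).1, le_of_lt (hx i).2⟩

lemma wMeas_mono (w : ES n → ℝ) {E F : Set (ES n)} (h : E ⊆ F) : wMeas w E ≤ wMeas w F :=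
  lintegral_mono_set h

lemma wMeas_rect_lt_top {w : ES n → ℝ} (hwi : LocallyIntegrable w volume) (R : Rect n) :
    wMeas w R.set < ⊤ := by
  obtain ⟨K, hK, hRK⟩ := rect_subset_compact R
  calc wMeas w R.set ≤ wMeas w K := wMeas_mono w hRK
    _ ≤ ∫⁻ x in K, (‖w x‖₊ : ℝ≥0∞) := by
        refine lintegral_mono fun x => ?_
        exact ENNReal.ofReal_le_of_le_toReal (by simp [Real.norm_eq_abs, le_abs_self, abs_nonneg])
    _ < ⊤ := (hwi.integrableOn_isCompact hK).2

lemma mu_rect_lt_top (μ : Measure (ES n)) [IsLocallyFiniteMeasure μ] (R : Rect n) :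
    μ R.set < ⊤ := by
  obtain ⟨K, hK, hRK⟩ := rect_subset_compact R
  exact lt_of_le_of_lt (measure_mono hRK) hK.measure_lt_top

lemma aq_key {n : ℕ} {q : ℝ} (hq : 1 ≤ q) {w : ES n → ℝ}
    (hwm : AEMeasurable (wE w) volume)
    (hwA : aqR n q w ≠ ⊤) {R S : Rect n} (hsub : S.set ⊆ R.set)
    (hwfin : wMeas w R.set < ⊤) (hwpos : 0 < wMeas w R.set) :
    wMeas w R.set * (volume S.set) ^ q ≤ aqR n q w * (volume R.set) ^ q * wMeas w S.set := by
  have hvR0 : volume R.set ≠ 0 := (volume_rect_pos R).ne'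
  have hvRT : volume R.set ≠ ⊤ := (volume_rect_lt_top R).ne
  have hvS0 : volume S.set ≠ 0 := (volume_rect_pos S).ne'
  have hvST : volume S.set ≠ ⊤ := (volume_rect_lt_top S).ne
  have hwS_fin : wMeas w S.set < ⊤ := lt_of_le_of_lt (wMeas_mono w hsub) hwfin
  have hRmem : R.set ∈ rectFamily n := ⟨R, rfl⟩
  rcases eq_or_lt_of_le hq with hq1 | hq1
  · -- q = 1
    subst hq1
    rw [ENNReal.rpow_one, ENNReal.rpow_one]
    have hKdef : aqR n 1 w =
        sInf {c : ℝ≥0∞ | ∀ E ∈ rectFamily n,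
          lavg (wE w) E ≤ c * essInf (wE w) (volume.restrict E)} := by
      rw [aqR, aqConstOn, if_pos rfl]
    set K := aqR n 1 w with hK
    -- essInf bound: essInf over R * |S| ≤ w(S)
    have hess : essInf (wE w) (volume.restrict R.set) * volume S.set ≤ wMeas w S.set := by
      have hae : ∀ᵐ x ∂(volume.restrict S.set),
          essInf (wE w) (volume.restrict R.set) ≤ wE w x := by
        exact ae_restrict_of_ae_restrict_of_subset hsub (ae_essInf_le)
      calc essInf (wE w) (volume.restrict R.set) * volume S.set
          = ∫⁻ _ in S.set, essInf (wE w) (volume.restrict R.set) := by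
            rw [setLIntegral_const]
        _ ≤ ∫⁻ x in S.set, wE w x := lintegral_mono_ae hae
    have hstep : ∀ c, K < c → wMeas w R.set * volume S.set ≤ c * (volume R.set * wMeas w S.set) := by
      intro c hc
      rw [hKdef] at hc
      obtain ⟨c', hc'mem, hc'lt⟩ := sInf_lt_iff.mp hc
      have h1 : lavg (wE w) R.set ≤ c' * essInf (wE w) (volume.restrict R.set) := hc'mem R.set hRmem
      have h2 : wMeas w R.set ≤ c' * essInf (wE w) (volume.restrict R.set) * volume R.set := by
        have := ENNReal.div_le_iff hvR0 hvRT |>.mp h1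
        exact this
      calc wMeas w R.set * volume S.set
          ≤ (c' * essInf (wE w) (volume.restrict R.set) * volume R.set) * volume S.set :=
            mul_le_mul_left h2 _
        _ = c' * (essInf (wE w) (volume.restrict R.set) * volume S.set) * volume R.set := by ring
        _ ≤ c' * wMeas w S.set * volume R.set := by
            exact mul_le_mul_left (mul_le_mul_right hess _) _
        _ ≤ c * (volume R.set * wMeas w S.set) := by
            rw [mul_assoc, mul_comm (wMeas w S.set)]
            exact mul_le_mul_left hc'lt.le _
    -- pass to the limit c → K
    have hF : volume R.set * wMeas w S.set ≠ ⊤ := ENNReal.mul_ne_top hvRT hwS_fin.ne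
    rcases eq_or_ne (volume R.set * wMeas w S.set) 0 with hF0 | hF0
    · have := hstep (K + 1) (by simp [ENNReal.lt_add_right, hwA])
      rw [hF0, mul_zero] at this
      exact le_trans this (zero_le)
    · refine ENNReal.le_of_forall_pos_le_add fun ε hε hfin => ?_
      have hεF : (0:ℝ≥0∞) < ε / (volume R.set * wMeas w S.set) :=
        ENNReal.div_pos (by exact_mod_cast hε.ne') hF
      have hc : K < K + ε / (volume R.set * wMeas w S.set) :=
        ENNReal.lt_add_right (by rw [hK]; exact hwA) hεF.ne'
      calc wMeas w R.set * volume S.set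
          ≤ (K + ε / (volume R.set * wMeas w S.set)) * (volume R.set * wMeas w S.set) :=
            hstep _ hc
        _ = K * (volume R.set * wMeas w S.set)
            + (ε / (volume R.set * wMeas w S.set)) * (volume R.set * wMeas w S.set) := by
            rw [add_mul]
        _ ≤ K * (volume R.set * wMeas w S.set) + ε := by
            gcongr
            rw [mul_comm]
            exact ENNReal.mul_div_le
        _ = K * volume R.set * wMeas w S.set + ε := by rw [mul_assoc]
  · -- 1 < q
    have hqne : q ≠ 1 := hq1.ne'
    have hq0 : (0:ℝ) < q := lt_trans zero_lt_one hq1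
    have hq1' : (0:ℝ) < q - 1 := sub_pos.2 hq1
    set σ : ES n → ℝ≥0∞ := fun x => wE w x ^ (-1 / (q - 1)) with hσdef
    have hKdef : aqR n q w = ⨆ E ∈ rectFamily n, lavg (wE w) E * (lavg σ E) ^ (q - 1) := by
      rw [aqR, aqConstOn, if_neg hqne]
    have hR : lavg (wE w) R.set * (lavg σ R.set) ^ (q - 1) ≤ aqR n q w := by
      rw [hKdef]
      exact le_iSup₂ (f := fun E _ => lavg (wE w) E * (lavg σ E) ^ (q - 1)) R.set hRmem
    set I := ∫⁻ x in R.set, σ x with hIdef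
    have hlavgw_pos : 0 < lavg (wE w) R.set := ENNReal.div_pos hwpos.ne' hvRT
    have hIfin : I ≠ ⊤ := by
      intro hItop
      have h1 : lavg σ R.set = ⊤ := by
        rw [lavg, ← hIdef, hItop, ENNReal.top_div_of_ne_top hvRT]
      have h2 : lavg (wE w) R.set * (lavg σ R.set) ^ (q - 1) = ⊤ := by
        rw [h1, ENNReal.top_rpow_of_pos hq1', ENNReal.mul_top hlavgw_pos.ne']
      exact hwA (top_le_iff.mp (h2 ▸ hR))
    -- a.e. positivity of w on S
    have hσmeas : AEMeasurable σ (volume.restrict R.set) :=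
      (hwm.restrict).pow aemeasurable_const
    have haeR : ∀ᵐ x ∂volume.restrict R.set, wE w x ≠ 0 := by
      have hfin : ∀ᵐ x ∂volume.restrict R.set, σ x < ⊤ := ae_lt_top' hσmeas hIfin
      filter_upwards [hfin] with x hx hx0
      simp only [hσdef] at hx
      rw [hx0, ENNReal.zero_rpow_of_neg (div_neg_of_neg_of_pos (by norm_num) hq1')] at hx
      exact (lt_irrefl _ hx)
    have haeS : ∀ᵐ x ∂volume.restrict S.set, wE w x ≠ 0 :=
      ae_restrict_of_ae_restrict_of_subset hsub haeR
    have hconj : q.HolderConjugate (q / (q - 1)) := Real.HolderConjugate.conjExponent hq1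
    -- Hölder
    have hint : volume S.set ≤
        (∫⁻ x in S.set, wE w x) ^ (1/q) * (∫⁻ x in S.set, σ x) ^ (1/(q/(q-1))) := by
      have hfg : ∀ᵐ x ∂volume.restrict S.set,
          (1:ℝ≥0∞) ≤ ((fun x => wE w x ^ (1/q)) * fun x => σ x ^ ((q-1)/q)) x := by
        filter_upwards [haeS] with x hx
        have hT : wE w x ≠ ⊤ := ENNReal.ofReal_ne_top
        have : (fun x => wE w x ^ (1/q)) x * (fun x => σ x ^ ((q-1)/q)) x
            = wE w x ^ (1/q + (-1/(q-1)) * ((q-1)/q)) := by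
          rw [ENNReal.rpow_add _ _ hx hT, hσdef]
          simp only []
          rw [← ENNReal.rpow_mul]
        rw [Pi.mul_apply, this]
        have hexp : 1/q + (-1/(q-1)) * ((q-1)/q) = 0 := by field_simp; ring
        rw [hexp, ENNReal.rpow_zero]
      calc volume S.set = ∫⁻ _ in S.set, (1:ℝ≥0∞) := by simp
        _ ≤ ∫⁻ x in S.set, ((fun x => wE w x ^ (1/q)) * fun x => σ x ^ ((q-1)/q)) x :=
            lintegral_mono_ae hfg
        _ ≤ (∫⁻ x in S.set, (wE w x ^ (1/q)) ^ q) ^ (1/q) *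
            (∫⁻ x in S.set, (σ x ^ ((q-1)/q)) ^ (q/(q-1))) ^ (1/(q/(q-1))) :=
            ENNReal.lintegral_mul_le_Lp_mul_Lq _ hconj
              ((hwm.restrict).pow aemeasurable_const)
              (((hwm.restrict).pow aemeasurable_const).pow aemeasurable_const)
        _ = (∫⁻ x in S.set, wE w x) ^ (1/q) * (∫⁻ x in S.set, σ x) ^ (1/(q/(q-1))) := by
            congr 1
            · congr 1
              refine lintegral_congr fun x => ?_
              rw [← ENNReal.rpow_mul, one_div, inv_mul_cancel₀ hq0.ne', ENNReal.rpow_one]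
            · congr 1
              refine lintegral_congr fun x => ?_
              have he : (q-1)/q * (q/(q-1)) = 1 := by
                rw [div_mul_div_comm, mul_comm]
                exact div_self (mul_pos hq0 hq1').ne'
              rw [← ENNReal.rpow_mul, he, ENNReal.rpow_one]
    have hS2 : (volume S.set) ^ q ≤ wMeas w S.set * I ^ (q - 1) := by
      have h1 : ((∫⁻ x in S.set, wE w x) ^ (1/q) * (∫⁻ x in S.set, σ x) ^ (1/(q/(q-1)))) ^ q
          = wMeas w S.set * ((∫⁻ x in S.set, σ x)) ^ (q - 1) := by
        rw [ENNReal.mul_rpow_of_nonneg _ _ hq0.le, ← ENNReal.rpow_mul, ← ENNReal.rpow_mul,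
          one_div, inv_mul_cancel₀ hq0.ne', ENNReal.rpow_one]
        rw [one_div_div, div_mul_cancel₀ _ hq0.ne']
        simp only [wMeas]
      calc (volume S.set) ^ q
          ≤ ((∫⁻ x in S.set, wE w x) ^ (1/q) * (∫⁻ x in S.set, σ x) ^ (1/(q/(q-1)))) ^ q :=
            ENNReal.rpow_le_rpow hint hq0.le
        _ = wMeas w S.set * ((∫⁻ x in S.set, σ x)) ^ (q - 1) := h1
        _ ≤ wMeas w S.set * I ^ (q - 1) := by
            gcongr
            exact lintegral_mono_set hsub
    have hR2 : wMeas w R.set * I ^ (q - 1) ≤ aqR n q w * (volume R.set) ^ q := by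
      have hvq0 : (volume R.set) ^ q ≠ 0 := (ENNReal.rpow_pos (volume_rect_pos R) hvRT).ne'
      have hvqT : (volume R.set) ^ q ≠ ⊤ := ENNReal.rpow_ne_top_of_nonneg hq0.le hvRT
      have heq : lavg (wE w) R.set * (lavg σ R.set) ^ (q - 1)
          = (wMeas w R.set * I ^ (q - 1)) / (volume R.set) ^ q := by
        have hv1T : (volume R.set) ^ (q-1) ≠ ⊤ := ENNReal.rpow_ne_top_of_nonneg hq1'.le hvRT
        have hv10 : (volume R.set) ^ (q-1) ≠ 0 := (ENNReal.rpow_pos (volume_rect_pos R) hvRT).ne'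
        rw [lavg, lavg, ← hIdef, ENNReal.div_rpow_of_nonneg _ _ hq1'.le,
          div_eq_mul_inv, div_eq_mul_inv, div_eq_mul_inv,
          ]
        have hvq : (volume R.set) ^ q = volume R.set * (volume R.set) ^ (q-1) := by
          have h2 := ENNReal.rpow_add 1 (q-1) hvR0 hvRT
          rw [ENNReal.rpow_one] at h2
          rw [← h2]
          congr 1
          ring
        rw [hvq, ENNReal.mul_inv (Or.inl hvR0) (Or.inl hvRT)]
        simp only [wMeas]
        ring
      rw [heq] at hR
      exact (ENNReal.div_le_iff hvq0 hvqT).mp hR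
    calc wMeas w R.set * (volume S.set) ^ q
        ≤ wMeas w R.set * (wMeas w S.set * I ^ (q - 1)) := mul_le_mul_right hS2 _
      _ = (wMeas w R.set * I ^ (q - 1)) * wMeas w S.set := by ring
      _ ≤ (aqR n q w * (volume R.set) ^ q) * wMeas w S.set := mul_le_mul_left hR2 _

lemma per_term {n : ℕ} {q p pM δ β γ : ℝ} {w : ES n → ℝ} (hq : 1 ≤ q)
    (hwm : AEMeasurable (wE w) volume) (hwA : aqR n q w ≠ ⊤)
    {R Ti : Rect n} (hdy : R.DyadicSub Ti) (μ : Measure (ES n))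
    (hwfin : wMeas w R.set < ⊤) (hw0 : wMeas w R.set ≠ 0)
    (hμfin : μ R.set < ⊤)
    (hβ0 : 0 ≤ β) (hγ0 : 0 ≤ γ) (hp0 : 0 < p) (hpM0 : 0 < pM)
    (hexp1 : 1/p*pM = 1+β) (hexp2 : δ*pM - (n:ℝ)*q*β = (n:ℝ)*γ) :
    (ENNReal.ofReal (Ti.diam ^ δ) * (μ Ti.set / wMeas w Ti.set) ^ (1/p)) ^ pM
        * wMeas w Ti.set * (wMeas w R.set) ^ β
      ≤ (aqR n q w ^ β * ENNReal.ofReal (R.diam ^ δ) ^ pM * (μ R.set) ^ β)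
        * ((volume Ti.set / volume R.set) ^ γ * μ Ti.set) := by
  obtain ⟨hsubT, j, hdiam, hvol⟩ := dyadic_main hdy
  by_cases hwT0 : wMeas w Ti.set = 0
  · rw [hwT0, mul_zero, zero_mul]
    exact zero_le
  by_cases hμT0 : μ Ti.set = 0
  · rw [hμT0, ENNReal.zero_div, ENNReal.zero_rpow_of_pos (by positivity : (0:ℝ) < 1/p),
      mul_zero, ENNReal.zero_rpow_of_pos hpM0, zero_mul, zero_mul]
    exact zero_le
  -- notation
  set K := aqR n q w with hK
  set wR := wMeas w R.set with hwR
  set wT := wMeas w Ti.set with hwT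
  set vR := volume R.set with hvR
  set vT := volume Ti.set with hvT
  set μR := μ R.set with hμR
  set μT := μ Ti.set with hμT
  set A := ENNReal.ofReal (R.diam ^ δ) with hA
  set c := ENNReal.ofReal ((2:ℝ)^j)⁻¹ with hc
  have hc0 : c ≠ 0 := (ENNReal.ofReal_pos.2 (by positivity)).ne'
  have hcT : c ≠ ⊤ := ENNReal.ofReal_ne_top
  have hvR0 : vR ≠ 0 := (volume_rect_pos R).ne'
  have hvRT : vR ≠ ⊤ := (volume_rect_lt_top R).ne
  have hwTfin : wT ≠ ⊤ := (lt_of_le_of_lt (wMeas_mono w hsubT) hwfin).ne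
  have hμTfin : μT ≠ ⊤ := (lt_of_le_of_lt (measure_mono hsubT) hμfin).ne
  have hμTle : μT ≤ μR := measure_mono hsubT
  -- (e1) diam factor
  have h2pos : (0:ℝ) < ((2:ℝ)^j)⁻¹ := by positivity
  have he1 : ENNReal.ofReal (Ti.diam ^ δ) = A * c ^ δ := by
    rw [hdiam, Real.mul_rpow (diam_nonneg R) h2pos.le,
      ENNReal.ofReal_mul (Real.rpow_nonneg (diam_nonneg R) δ), hA, hc]
    congr 1
    exact (ENNReal.ofReal_rpow_of_pos h2pos).symm
  -- (e2) volume ratio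
  have he2 : vT / vR = c ^ ((n:ℕ):ℝ) := by
    rw [hvol, mul_comm, mul_div_assoc, ENNReal.div_self hvR0 hvRT, mul_one,
      ENNReal.rpow_natCast]
  -- key A_q bound, cancelled form : wR * c^(n*q) ≤ K * wT
  have hkb : wR * c ^ ((n:ℝ)*q) ≤ K * wT := by
    have h0 := aq_key hq hwm hwA hsubT hwfin (pos_iff_ne_zero.2 hw0)
    have hvq : vT ^ q = vR ^ q * c ^ ((n:ℝ)*q) := by
      rw [hvol, ENNReal.mul_rpow_of_nonneg _ _ (le_trans zero_le_one hq),
        ← ENNReal.rpow_natCast c n, ← ENNReal.rpow_mul]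
    rw [← hvR, ← hvT, ← hwR, ← hwT, ← hK, hvq] at h0
    have hvq0 : vR ^ q ≠ 0 := (ENNReal.rpow_pos (volume_rect_pos R) hvRT).ne'
    have hvqT : vR ^ q ≠ ⊤ := ENNReal.rpow_ne_top_of_nonneg (le_trans zero_le_one hq) hvRT
    have h1 : (wR * c ^ ((n:ℝ)*q)) * vR ^ q ≤ (K * wT) * vR ^ q := by
      calc (wR * c ^ ((n:ℝ)*q)) * vR ^ q = wR * (vR ^ q * c ^ ((n:ℝ)*q)) := by ring
        _ ≤ K * vR ^ q * wT := h0
        _ = (K * wT) * vR ^ q := by ring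
    exact (ENNReal.mul_le_mul_iff_left hvq0 hvqT).mp h1
  -- raised key bound
  have hkb2 : (wT ^ β)⁻¹ * wR ^ β ≤ K ^ β * (c ^ ((n:ℝ)*q*β))⁻¹ := by
    have h1 : wR ^ β * c ^ ((n:ℝ)*q*β) ≤ K ^ β * wT ^ β := by
      have := ENNReal.rpow_le_rpow hkb hβ0
      rwa [ENNReal.mul_rpow_of_nonneg _ _ hβ0, ENNReal.mul_rpow_of_nonneg _ _ hβ0,
        ← ENNReal.rpow_mul] at this
    have hcnq0 : c ^ ((n:ℝ)*q*β) ≠ 0 := (ENNReal.rpow_pos (pos_iff_ne_zero.2 hc0) hcT).ne'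
    have hcnqT : c ^ ((n:ℝ)*q*β) ≠ ⊤ :=
      ENNReal.rpow_ne_top_of_nonneg (by positivity) hcT
    have hwb0 : wT ^ β ≠ 0 := (ENNReal.rpow_pos (pos_iff_ne_zero.2 hwT0) hwTfin).ne'
    have hwbT : wT ^ β ≠ ⊤ := ENNReal.rpow_ne_top_of_nonneg hβ0 hwTfin
    calc (wT ^ β)⁻¹ * wR ^ β
        = (wR ^ β * c ^ ((n:ℝ)*q*β)) * ((c ^ ((n:ℝ)*q*β))⁻¹ * (wT ^ β)⁻¹) := by
          rw [mul_comm (wR ^ β)]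
          calc (wT ^ β)⁻¹ * wR ^ β
              = (c ^ ((n:ℝ)*q*β) * (c ^ ((n:ℝ)*q*β))⁻¹) * ((wT ^ β)⁻¹ * wR ^ β) := by
                rw [ENNReal.mul_inv_cancel hcnq0 hcnqT, one_mul]
            _ = c ^ ((n:ℝ)*q*β) * wR ^ β * ((c ^ ((n:ℝ)*q*β))⁻¹ * (wT ^ β)⁻¹) := by ring
      _ ≤ (K ^ β * wT ^ β) * ((c ^ ((n:ℝ)*q*β))⁻¹ * (wT ^ β)⁻¹) := mul_le_mul_left h1 _
      _ = (K ^ β * (c ^ ((n:ℝ)*q*β))⁻¹) * (wT ^ β * (wT ^ β)⁻¹) := by ring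
      _ = K ^ β * (c ^ ((n:ℝ)*q*β))⁻¹ := by
          rw [ENNReal.mul_inv_cancel hwb0 hwbT, mul_one]
  -- exponent collection for c
  have he3 : c ^ (δ*pM) * (c ^ ((n:ℝ)*q*β))⁻¹ = (vT / vR) ^ γ := by
    rw [← ENNReal.rpow_neg, ← ENNReal.rpow_add _ _ hc0 hcT, he2, ← ENNReal.rpow_mul,
      show δ * pM + -(↑n*q*β) = ↑n*γ by linarith]
  -- measure power bound
  have he4 : μT ^ (1+β) ≤ μT * μR ^ β := by
    have h2 := ENNReal.rpow_add 1 β hμT0 hμTfin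
    rw [ENNReal.rpow_one] at h2
    rw [h2]
    exact mul_le_mul_right (ENNReal.rpow_le_rpow hμTle hβ0) _
  -- unravel the left side
  have hwinv : ((μT / wT) ^ (1/p)) ^ pM = μT ^ (1+β) * (wT ^ (1+β))⁻¹ := by
    rw [← ENNReal.rpow_mul, hexp1, ENNReal.div_rpow_of_nonneg _ _ (by linarith), div_eq_mul_inv]
  have hwcol : (wT ^ (1+β))⁻¹ * wT = (wT ^ β)⁻¹ := by
    have h2 := ENNReal.rpow_add (-(1+β)) 1 hwT0 hwTfin
    rw [ENNReal.rpow_one] at h2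
    calc (wT ^ (1+β))⁻¹ * wT = wT ^ (-(1+β)) * wT := by rw [ENNReal.rpow_neg]
      _ = wT ^ (-(1+β)+1) := h2.symm
      _ = (wT ^ β)⁻¹ := by rw [show -(1+β)+1 = -β by ring, ENNReal.rpow_neg]
  calc (ENNReal.ofReal (Ti.diam ^ δ) * (μT / wT) ^ (1/p)) ^ pM * wT * wR ^ β
      = (A * c ^ δ * (μT / wT) ^ (1/p)) ^ pM * wT * wR ^ β := by rw [he1]
    _ = A ^ pM * (c ^ δ) ^ pM * ((μT / wT) ^ (1/p)) ^ pM * wT * wR ^ β := by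
        rw [ENNReal.mul_rpow_of_nonneg _ _ hpM0.le, ENNReal.mul_rpow_of_nonneg _ _ hpM0.le]
    _ = A ^ pM * c ^ (δ*pM) * (μT ^ (1+β) * ((wT ^ (1+β))⁻¹ * wT)) * wR ^ β := by
        rw [hwinv, ← ENNReal.rpow_mul]
        ring
    _ = A ^ pM * c ^ (δ*pM) * μT ^ (1+β) * ((wT ^ β)⁻¹ * wR ^ β) := by
        rw [hwcol]
        ring
    _ ≤ A ^ pM * c ^ (δ*pM) * (μT * μR ^ β) * (K ^ β * (c ^ ((n:ℝ)*q*β))⁻¹) := by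
        exact mul_le_mul (mul_le_mul_right he4 _) hkb2 (zero_le) (zero_le)
    _ = (K ^ β * A ^ pM * μR ^ β) * ((c ^ (δ*pM) * (c ^ ((n:ℝ)*q*β))⁻¹) * μT) := by ring
    _ = (K ^ β * A ^ pM * μR ^ β) * ((vT / vR) ^ γ * μT) := by rw [he3]

end AuxStmt14

/-- the functional `a(R) = d(R)^δ (μ(R)/w(R))^{1/p}` satisfies the
`SD`-smallness-preservation estimate at the exponent `p*_M`. -/
theorem stmt14 (n : ℕ) (hn : 1 ≤ n) (p q : ℝ) (hq : 1 ≤ q) (hqp : q ≤ p) (hp : p < n)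
    (δ : ℝ) (hδ : 0 < δ)
    (w : ES n → ℝ) (hw : ∀ x, 0 ≤ w x) (hwi : LocallyIntegrable w volume)
    (hwA : aqR n q w ≠ ⊤)
    (μ : Measure (ES n)) (hμ : IsLocallyFiniteMeasure μ)
    (M pM : ℝ) (hM : 1 < M) (hsub : δ / (n * q * M) < 1 / p)
    (hpM : 1 / p - 1 / pM = δ / (n * q * M))
    (R : Rect n) (S : Set ℕ) (T : ℕ → Rect n)
    (hT : ∀ i ∈ S, R.DyadicSub (T i))
    (hdisj : S.PairwiseDisjoint fun i => (T i).set) :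
    (∑' i : S,
        (ENNReal.ofReal ((T ↑i).diam ^ δ) * (μ (T ↑i).set / wMeas w (T ↑i).set) ^ (1 / p)) ^ pM *
          wMeas w (T ↑i).set / wMeas w R.set) ^ (1 / pM)
      ≤ aqR n q w ^ (δ / (n * q * M)) *
          (volume (⋃ i ∈ S, (T i).set) / volume R.set) ^ (δ / ((n : ℝ) * (M / (M - 1)))) *
          (ENNReal.ofReal (R.diam ^ δ) * (μ R.set / wMeas w R.set) ^ (1 / p)) := by
  have hq0 : (0:ℝ) < q := lt_of_lt_of_le zero_lt_one hq
  have hp0 : (0:ℝ) < p := lt_of_lt_of_le hq0 hqp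
  have hn0 : (0:ℝ) < (n:ℝ) := by exact_mod_cast hn
  have hM0 : (0:ℝ) < M := lt_trans zero_lt_one hM
  have hM1 : (0:ℝ) < M - 1 := sub_pos.2 hM
  have hMM : (0:ℝ) < M / (M - 1) := div_pos hM0 hM1
  have hpMinv : (0:ℝ) < 1/pM := by
    have h1 : 1/pM = 1/p - δ/(↑n*q*M) := by linarith
    rw [h1]; linarith
  have hpM0 : (0:ℝ) < pM := by
    by_contra h
    push_neg at h
    have : 1/pM ≤ 0 := one_div_nonpos.2 h
    linarith
  have hwm : AEMeasurable (wE w) volume :=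
    ENNReal.measurable_ofReal.comp_aemeasurable hwi.aestronglyMeasurable.aemeasurable
  set β := pM * (δ / (↑n * q * M)) with hβ
  set γ := pM * (δ / (↑n * (M / (M - 1)))) with hγ
  have hβ0 : 0 ≤ β := (mul_pos hpM0 (div_pos hδ (by positivity))).le
  have hγ0 : 0 ≤ γ := (mul_pos hpM0 (div_pos hδ (mul_pos hn0 hMM))).le
  have hexp1 : 1/p*pM = 1 + β := by
    have h1 : 1/p = 1/pM + δ/(↑n*q*M) := by linarith
    rw [h1, add_mul, one_div_mul_cancel hpM0.ne', hβ]
    ring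
  have hexp2 : δ*pM - (↑n:ℝ)*q*β = (↑n:ℝ)*γ := by
    rw [hβ, hγ]
    field_simp
  by_cases hw0 : wMeas w R.set = 0
  · have hterm : ∀ i : S,
        (ENNReal.ofReal ((T ↑i).diam ^ δ) * (μ (T ↑i).set / wMeas w (T ↑i).set) ^ (1 / p)) ^ pM *
          wMeas w (T ↑i).set / wMeas w R.set = 0 := by
      intro i
      have h1 : wMeas w (T ↑i).set = 0 :=
        le_antisymm (le_trans (wMeas_mono w (dyadic_main (hT ↑i i.2)).1) (le_of_eq hw0))
          (zero_le)
      rw [h1, mul_zero, ENNReal.zero_div]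
    rw [tsum_congr hterm, tsum_zero, ENNReal.zero_rpow_of_pos hpMinv]
    exact zero_le
  by_cases hμ0 : μ R.set = 0
  · have hterm : ∀ i : S,
        (ENNReal.ofReal ((T ↑i).diam ^ δ) * (μ (T ↑i).set / wMeas w (T ↑i).set) ^ (1 / p)) ^ pM *
          wMeas w (T ↑i).set / wMeas w R.set = 0 := by
      intro i
      have h1 : μ (T ↑i).set = 0 :=
        le_antisymm (le_trans (measure_mono (dyadic_main (hT ↑i i.2)).1) (le_of_eq hμ0))
          (zero_le)
      rw [h1, ENNReal.zero_div, ENNReal.zero_rpow_of_pos (by positivity : (0:ℝ) < 1/p),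
        mul_zero, ENNReal.zero_rpow_of_pos hpM0, zero_mul, ENNReal.zero_div]
    rw [tsum_congr hterm, tsum_zero, ENNReal.zero_rpow_of_pos hpMinv]
    exact zero_le
  -- main case
  have hwfin : wMeas w R.set < ⊤ := wMeas_rect_lt_top hwi R
  have hμfin : μ R.set < ⊤ := mu_rect_lt_top μ R
  have hvR0 : volume R.set ≠ 0 := (volume_rect_pos R).ne'
  have hvRT : volume R.set ≠ ⊤ := (volume_rect_lt_top R).ne
  set K := aqR n q w with hK
  set A := ENNReal.ofReal (R.diam ^ δ) with hA
  set wR := wMeas w R.set with hwR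
  set μR := μ R.set with hμR
  set vR := volume R.set with hvR
  set vU := volume (⋃ i ∈ S, (T i).set) with hvU
  suffices hmain :
      (∑' i : S,
        (ENNReal.ofReal ((T ↑i).diam ^ δ) * (μ (T ↑i).set / wMeas w (T ↑i).set) ^ (1 / p)) ^ pM *
          wMeas w (T ↑i).set / wR)
      ≤ (K ^ (δ / (↑n * q * M)) * (vU / vR) ^ (δ / (↑n * (M / (M - 1)))) *
          (A * (μR / wR) ^ (1 / p))) ^ pM by
    have h2 := ENNReal.rpow_le_rpow hmain (le_of_lt hpMinv)
    rwa [← ENNReal.rpow_mul, mul_one_div, div_self hpM0.ne', ENNReal.rpow_one] at h2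
  have hRHSexp :
      (K ^ (δ / (↑n * q * M)) * (vU / vR) ^ (δ / (↑n * (M / (M - 1)))) *
          (A * (μR / wR) ^ (1 / p))) ^ pM
      = K ^ β * (vU / vR) ^ γ * A ^ pM * (μR ^ (1+β) * (wR ^ (1+β))⁻¹) := by
    rw [ENNReal.mul_rpow_of_nonneg _ _ hpM0.le, ENNReal.mul_rpow_of_nonneg _ _ hpM0.le,
      ENNReal.mul_rpow_of_nonneg _ _ hpM0.le,
      ← ENNReal.rpow_mul K, ← ENNReal.rpow_mul (vU / vR), ← ENNReal.rpow_mul (μR / wR),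
      show δ / (↑n * q * M) * pM = β by rw [hβ]; ring,
      show δ / (↑n * (M / (M - 1))) * pM = γ by rw [hγ]; ring,
      show 1/p*pM = 1 + β from hexp1,
      ENNReal.div_rpow_of_nonneg _ _ (by linarith : (0:ℝ) ≤ 1+β)]
    simp only [div_eq_mul_inv]
    ring
  rw [hRHSexp]
  have hfg : ∀ i : S,
      (ENNReal.ofReal ((T ↑i).diam ^ δ) * (μ (T ↑i).set / wMeas w (T ↑i).set) ^ (1 / p)) ^ pM *
        wMeas w (T ↑i).set / wR
      = ((ENNReal.ofReal ((T ↑i).diam ^ δ) *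
          (μ (T ↑i).set / wMeas w (T ↑i).set) ^ (1 / p)) ^ pM *
          wMeas w (T ↑i).set * wR ^ β) * (wR ^ (1+β))⁻¹ := by
    intro i
    have hwinv : wR⁻¹ = wR ^ β * (wR ^ (1+β))⁻¹ := by
      rw [← ENNReal.rpow_neg, ← ENNReal.rpow_add _ _ hw0 hwfin.ne,
        show β + -(1+β) = -1 by ring, ENNReal.rpow_neg_one]
    rw [div_eq_mul_inv, hwinv]
    ring
  have hμpow : μR ^ β * μR = μR ^ (1+β) := by
    have h2 := ENNReal.rpow_add 1 β hμ0 hμfin.ne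
    rw [ENNReal.rpow_one] at h2
    rw [h2]
    ring
  have hsum :
      (∑' i : S,
        (ENNReal.ofReal ((T ↑i).diam ^ δ) * (μ (T ↑i).set / wMeas w (T ↑i).set) ^ (1 / p)) ^ pM *
          wMeas w (T ↑i).set * wR ^ β)
      ≤ K ^ β * A ^ pM * μR ^ β * ((vU / vR) ^ γ * μR) := by
    calc (∑' i : S,
          (ENNReal.ofReal ((T ↑i).diam ^ δ) * (μ (T ↑i).set / wMeas w (T ↑i).set) ^ (1 / p)) ^ pM *
            wMeas w (T ↑i).set * wR ^ β)
        ≤ ∑' i : S, (K ^ β * A ^ pM * μR ^ β) *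
            ((volume (T ↑i).set / vR) ^ γ * μ (T ↑i).set) := by
          refine Summable.tsum_le_tsum (fun i => ?_) ENNReal.summable ENNReal.summable
          exact per_term hq hwm hwA (hT ↑i i.2) μ hwfin hw0 hμfin hβ0 hγ0 hp0 hpM0 hexp1 hexp2
      _ = (K ^ β * A ^ pM * μR ^ β) *
            ∑' i : S, ((volume (T ↑i).set / vR) ^ γ * μ (T ↑i).set) := ENNReal.tsum_mul_left
      _ ≤ (K ^ β * A ^ pM * μR ^ β) * ∑' i : S, ((vU / vR) ^ γ * μ (T ↑i).set) := by
          refine mul_le_mul_right (Summable.tsum_le_tsum (fun i => ?_) ENNReal.summable ENNReal.summable) _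
          refine mul_le_mul_left (ENNReal.rpow_le_rpow ?_ hγ0) _
          exact ENNReal.div_le_div_right
            (measure_mono (Set.subset_biUnion_of_mem (u := fun i => (T i).set) i.2)) _
      _ = (K ^ β * A ^ pM * μR ^ β) * ((vU / vR) ^ γ * ∑' i : S, μ (T ↑i).set) := by
          rw [ENNReal.tsum_mul_left]
      _ ≤ (K ^ β * A ^ pM * μR ^ β) * ((vU / vR) ^ γ * μR) := by
          refine mul_le_mul_right (mul_le_mul_right ?_ _) _
          rw [← measure_biUnion (Set.to_countable S) hdisj
            (fun i _ => measurableSet_rect (T i))]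
          exact measure_mono (Set.iUnion₂_subset fun i hi => (dyadic_main (hT i hi)).1)
  calc (∑' i : S,
        (ENNReal.ofReal ((T ↑i).diam ^ δ) * (μ (T ↑i).set / wMeas w (T ↑i).set) ^ (1 / p)) ^ pM *
          wMeas w (T ↑i).set / wR)
      = (∑' i : S,
        (ENNReal.ofReal ((T ↑i).diam ^ δ) * (μ (T ↑i).set / wMeas w (T ↑i).set) ^ (1 / p)) ^ pM *
          wMeas w (T ↑i).set * wR ^ β) * (wR ^ (1+β))⁻¹ := by
        rw [tsum_congr hfg, ENNReal.tsum_mul_right]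
    _ ≤ (K ^ β * A ^ pM * μR ^ β * ((vU / vR) ^ γ * μR)) * (wR ^ (1+β))⁻¹ :=
        mul_le_mul_left hsum _
    _ = K ^ β * (vU / vR) ^ γ * A ^ pM * (μR ^ (1+β) * (wR ^ (1+β))⁻¹) := by
        rw [← hμpow]
        ring

end
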